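/- Let N ≥ 2 and K ≥ 1 be integers and set S = ∑_{k=0}^{K-1} N^{-k}. Then for every nonnegative real x, ⌈⌈x⌉ · S⌉ ≤ ⌈x · S⌉ + 2. In particular, the upper and lower bounds ⌈⌈L̄⌉/C⌉ and ⌈L̄/C⌉ on the optimal download cost differ by at most 2. -/

import Mathlib

theorem stmt_12 (N K : ℕ) (hN : 2 ≤ N) (hK : 1 ≤ K) (x : ℝ) (hx : 0 ≤ x) :
    ⌈(⌈x⌉ : ℝ) * (∑ k ∈ Finset.range K, (1 / (N : ℝ)) ^ k)⌉ ≤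
      ⌈x * (∑ k ∈ Finset.range K, (1 / (N : ℝ)) ^ k)⌉ + 2 := by
  set S := ∑ k ∈ Finset.range K, (1 / (N : ℝ)) ^ k with hS
  have hS0 : 0 ≤ S := Finset.sum_nonneg (fun k _ => by positivity)
  have hS2 : S ≤ 2 := by
    calc S ≤ ∑ k ∈ Finset.range K, (1 / 2 : ℝ) ^ k := by
          apply Finset.sum_le_sum
          intro k _
          apply pow_le_pow_left₀ (by positivity)
          apply div_le_div_of_nonneg_left (by norm_num) (by norm_num)
          exact_mod_cast hN
      _ ≤ 2 := sum_geometric_two_le K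
  have h1 : (⌈x⌉ : ℝ) * S ≤ x * S + 2 := by
    have hc : (⌈x⌉ : ℝ) ≤ x + 1 := le_of_lt (Int.ceil_lt_add_one x)
    calc (⌈x⌉ : ℝ) * S ≤ (x + 1) * S := mul_le_mul_of_nonneg_right hc hS0
      _ = x * S + S := by ring
      _ ≤ x * S + 2 := by linarith
  calc ⌈(⌈x⌉ : ℝ) * S⌉ ≤ ⌈x * S + 2⌉ := Int.ceil_le_ceil h1
    _ = ⌈x * S + (2 : ℤ)⌉ := by norm_num
    _ = ⌈x * S⌉ + 2 := Int.ceil_add_intCast _ _
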